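/- Let q ∈ k[x₁,…,x_n] with q(0) = 1, and let w = (u,·) be a weight vector with u_i < 0 for 1 ≤ i ≤ n₂ and u_i = 0 for n₂ < i ≤ n. Write q = 1 - v₀ - v₁ where v₀ ∈ k[x_{n₂+1},…,x_n] with v₀(0)=0 and v₁ lies in the ideal generated by x₁,…,x_{n₂}. Then in k[[x]], the initial form of 1/q with respect to u is in_u(1/q) = 1/(1 - v₀); in particular in_u(1/q) belongs to the localization k[x]_{⟨x_{n₂+1},…,x_n⟩}. -/

import Mathlib

open scoped Classical

noncomputable section

/-- The `u`-weight of an exponent vector. -/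
def wtR {n : ℕ} (u : Fin n → ℝ) (α : Fin n →₀ ℕ) : ℝ := ∑ i, u i * (α i : ℝ)

/-- `g` is the initial form `in_u(f)` of the nonzero power series `f` (power series valued
version). -/
def IsInitS {n : ℕ} (K : Type*) [Field K] (u : Fin n → ℝ)
    (f g : MvPowerSeries (Fin n) K) : Prop :=
  f ≠ 0 ∧ ∃ c : ℝ,
    (∃ α, MvPowerSeries.coeff α f ≠ 0 ∧ wtR u α = c) ∧
    (∀ α, MvPowerSeries.coeff α f ≠ 0 → wtR u α ≤ c) ∧
    (∀ α, MvPowerSeries.coeff α g =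
      if wtR u α = c then MvPowerSeries.coeff α f else 0)

/-- Let `q ∈ k[x]` with `q(0) = 1`, written `q = 1 - v₀ - v₁` where `v₀` involves only the
variables `x_i` with `i ≥ m` and has zero constant term, and `v₁` lies in the ideal generated
by `x_1,…,x_m`.  For a weight `u` with `u_i < 0` for `i < m` and `u_i = 0` for `i ≥ m`, the
initial form of `1/q ∈ k[[x]]` is `in_u(1/q) = 1/(1 - v₀)`; in particular it belongs to the
localization `k[x]_{⟨x_{m+1},…,x_n⟩}`. -/
theorem initial_of_inverse {n m : ℕ} {K : Type*} [Field K] (u : Fin n → ℝ)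
    (hu1 : ∀ i : Fin n, (i : ℕ) < m → u i < 0)
    (hu2 : ∀ i : Fin n, m ≤ (i : ℕ) → u i = 0)
    (q v0 v1 : MvPolynomial (Fin n) K)
    (hq0 : MvPolynomial.constantCoeff q = 1)
    (hq : q = 1 - v0 - v1)
    (hv0vars : ∀ α ∈ v0.support, ∀ i : Fin n, (i : ℕ) < m → α i = 0)
    (hv00 : MvPolynomial.constantCoeff v0 = 0)
    (hv1 : ∀ α ∈ v1.support, ∃ i : Fin n, (i : ℕ) < m ∧ α i ≠ 0) :
    IsInitS K u ((q : MvPowerSeries (Fin n) K)⁻¹)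
        ((1 - (v0 : MvPowerSeries (Fin n) K))⁻¹) ∧
      ∃ a b : MvPolynomial (Fin n) K,
        b ∉ Ideal.span {g : MvPolynomial (Fin n) K | ∃ i : Fin n, m ≤ (i : ℕ) ∧
          g = MvPolynomial.X i} ∧
        (b : MvPowerSeries (Fin n) K) * (1 - (v0 : MvPowerSeries (Fin n) K))⁻¹ =
          (a : MvPowerSeries (Fin n) K) := by
  classical
  -- The predicate "only large variables occur".
  set P : (Fin n →₀ ℕ) → Prop := fun α => ∀ i : Fin n, (i : ℕ) < m → α i = 0 with hP
  have hcc : ∀ p : MvPolynomial (Fin n) K,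
      MvPowerSeries.constantCoeff (p : MvPowerSeries (Fin n) K) =
        MvPolynomial.constantCoeff p := by
    intro p
    rw [← MvPowerSeries.coeff_zero_eq_constantCoeff, MvPolynomial.coeff_coe]
    rfl
  have hsub : ∀ p r : MvPolynomial (Fin n) K,
      ((p - r : MvPolynomial (Fin n) K) : MvPowerSeries (Fin n) K) = (p : MvPowerSeries (Fin n) K) - r := by
    intro p r
    rw [← MvPolynomial.coeToMvPowerSeries.ringHom_apply, map_sub,
      MvPolynomial.coeToMvPowerSeries.ringHom_apply, MvPolynomial.coeToMvPowerSeries.ringHom_apply]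
  have hqc : MvPowerSeries.constantCoeff (q : MvPowerSeries (Fin n) K) ≠ 0 := by
    rw [hcc, hq0]; exact one_ne_zero
  -- constant coefficient of 1 - v0
  have hv0c : MvPowerSeries.constantCoeff
      (1 - (v0 : MvPowerSeries (Fin n) K)) ≠ 0 := by
    rw [map_sub, map_one, hcc, hv00, sub_zero]
    exact one_ne_zero
  -- the candidate for (1 - v0)⁻¹
  set F : MvPowerSeries (Fin n) K := fun α =>
    if P α then MvPowerSeries.coeff α ((q : MvPowerSeries (Fin n) K)⁻¹) else 0 with hF
  have hFcoeff : ∀ α, MvPowerSeries.coeff α F =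
      if P α then MvPowerSeries.coeff α ((q : MvPowerSeries (Fin n) K)⁻¹) else 0 :=
    fun α => rfl
  -- P is "additive"
  have hPadd : ∀ (β γ : Fin n →₀ ℕ), P (β + γ) ↔ P β ∧ P γ := by
    intro β γ
    constructor
    · intro h
      constructor <;> intro i hi <;>
        · have := h i hi
          simp only [Finsupp.add_apply] at this
          omega
    · rintro ⟨h1, h2⟩ i hi
      simp [Finsupp.add_apply, h1 i hi, h2 i hi]
  -- if P β then coeff β (1 - v0) = coeff β q
  have hkey : ∀ β, P β → MvPowerSeries.coeff β (1 - (v0 : MvPowerSeries (Fin n) K)) =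
      MvPowerSeries.coeff β (q : MvPowerSeries (Fin n) K) := by
    intro β hβ
    have hv1β : MvPolynomial.coeff β v1 = 0 := by
      by_contra h
      obtain ⟨i, hi, hne⟩ := hv1 β (MvPolynomial.mem_support_iff.mpr h)
      exact hne (hβ i hi)
    rw [hq, hsub, hsub, MvPolynomial.coe_one]
    simp only [map_sub, MvPolynomial.coeff_coe, hv1β, sub_zero]
  -- if ¬ P β then coeff β (1 - v0) = 0
  have hkey2 : ∀ β, ¬ P β → MvPowerSeries.coeff β (1 - (v0 : MvPowerSeries (Fin n) K)) = 0 := by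
    intro β hβ
    simp only [hP] at hβ
    push_neg at hβ
    obtain ⟨i, hi, hne⟩ := hβ
    have hβ0 : β ≠ 0 := by
      intro h; rw [h] at hne; simp at hne
    have hv0β : MvPolynomial.coeff β v0 = 0 := by
      by_contra h
      exact hne (hv0vars β (MvPolynomial.mem_support_iff.mpr h) i hi)
    rw [map_sub, MvPolynomial.coeff_coe, hv0β, MvPowerSeries.coeff_one, if_neg hβ0, sub_zero]
  -- (1 - v0) * F = 1
  have hmul : (1 - (v0 : MvPowerSeries (Fin n) K)) * F = 1 := by
    ext α
    rw [MvPowerSeries.coeff_mul]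
    by_cases hα : P α
    · have : ∀ p ∈ Finset.HasAntidiagonal.antidiagonal α,
          MvPowerSeries.coeff p.1 (1 - (v0 : MvPowerSeries (Fin n) K)) *
            MvPowerSeries.coeff p.2 F =
          MvPowerSeries.coeff p.1 (q : MvPowerSeries (Fin n) K) *
            MvPowerSeries.coeff p.2 ((q : MvPowerSeries (Fin n) K)⁻¹) := by
        intro p hp
        rw [Finset.HasAntidiagonal.mem_antidiagonal] at hp
        have hPp : P p.1 ∧ P p.2 := (hPadd p.1 p.2).mp (by rw [hp]; exact hα)
        rw [hkey p.1 hPp.1, hFcoeff, if_pos hPp.2]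
      rw [Finset.sum_congr rfl this, ← MvPowerSeries.coeff_mul,
        MvPowerSeries.mul_inv_cancel _ hqc]
    · have hα0 : α ≠ 0 := by
        intro h
        apply hα
        intro i _
        rw [h]; rfl
      have : ∀ p ∈ Finset.HasAntidiagonal.antidiagonal α,
          MvPowerSeries.coeff p.1 (1 - (v0 : MvPowerSeries (Fin n) K)) *
            MvPowerSeries.coeff p.2 F = 0 := by
        intro p hp
        rw [Finset.HasAntidiagonal.mem_antidiagonal] at hp
        by_cases h2 : P p.2
        · have h1 : ¬ P p.1 := by
            intro h1
            exact hα (hp ▸ (hPadd p.1 p.2).mpr ⟨h1, h2⟩)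
          rw [hkey2 p.1 h1, zero_mul]
        · rw [hFcoeff, if_neg h2, mul_zero]
      rw [Finset.sum_eq_zero this, MvPowerSeries.coeff_one, if_neg hα0]
  have hFinv : (1 - (v0 : MvPowerSeries (Fin n) K))⁻¹ = F :=
    (MvPowerSeries.inv_eq_iff_mul_eq_one hv0c).mpr (by rw [mul_comm]; exact hmul)
  -- weight facts
  have hwt0 : ∀ α : Fin n →₀ ℕ, wtR u α = 0 ↔ P α := by
    intro α
    unfold wtR
    rw [Finset.sum_eq_zero_iff_of_nonpos]
    · constructor
      · intro h i hi
        have := h i (Finset.mem_univ i)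
        rcases mul_eq_zero.mp this with h' | h'
        · exact absurd h' (ne_of_lt (hu1 i hi))
        · exact_mod_cast h'
      · intro h i _
        by_cases hi : (i : ℕ) < m
        · rw [h i hi]; simp
        · rw [hu2 i (le_of_not_gt hi), zero_mul]
    · intro i _
      by_cases hi : (i : ℕ) < m
      · exact mul_nonpos_of_nonpos_of_nonneg (le_of_lt (hu1 i hi)) (Nat.cast_nonneg _)
      · rw [hu2 i (le_of_not_gt hi), zero_mul]
  have hwtle : ∀ α : Fin n →₀ ℕ, wtR u α ≤ 0 := by
    intro α
    unfold wtR
    apply Finset.sum_nonpos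
    intro i _
    by_cases hi : (i : ℕ) < m
    · exact mul_nonpos_of_nonpos_of_nonneg (le_of_lt (hu1 i hi)) (Nat.cast_nonneg _)
    · rw [hu2 i (le_of_not_gt hi), zero_mul]
  constructor
  · refine ⟨?_, 0, ⟨0, ?_, ?_⟩, fun α _ => hwtle α, ?_⟩
    · intro h
      have := MvPowerSeries.mul_inv_cancel _ hqc
      rw [h, mul_zero] at this
      exact one_ne_zero this.symm
    · rw [MvPowerSeries.coeff_zero_eq_constantCoeff, MvPowerSeries.constantCoeff_inv,
        hcc, hq0, inv_one]
      exact one_ne_zero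
    · simp [wtR]
    · intro α
      rw [hFinv, hFcoeff]
      by_cases h : P α
      · rw [if_pos h, if_pos ((hwt0 α).mpr h)]
      · rw [if_neg h, if_neg (fun hc => h ((hwt0 α).mp hc))]
  · refine ⟨1, 1 - v0, ?_, ?_⟩
    · intro hmem
      have : MvPolynomial.constantCoeff (1 - v0) = 0 := by
        have : Ideal.span {g : MvPolynomial (Fin n) K | ∃ i : Fin n, m ≤ (i : ℕ) ∧
            g = MvPolynomial.X i} ≤ RingHom.ker (MvPolynomial.constantCoeff (σ := Fin n) (R := K)) := by
          rw [Ideal.span_le]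
          rintro g ⟨i, -, rfl⟩
          simp [RingHom.mem_ker]
        have := this hmem
        rwa [RingHom.mem_ker] at this
      rw [map_sub, map_one, hv00, sub_zero] at this
      exact one_ne_zero this
    · rw [hsub, MvPolynomial.coe_one]
      exact MvPowerSeries.mul_inv_cancel _ hv0c
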